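/- arXiv:2412.14637 — 7 statements merged into one kernel-verified Lean document; each statement's English description precedes it below -/
import Mathlib

section
/- If R : ℝ^N → ℝ is twice continuously differentiable and (L₀, L₁)-smooth, then for all y₁, y₂ ∈ ℝ^N and all t ∈ [0,1], with γ(t) = (1−t)·y₁ + t·y₂, one has ‖∇R(γ(t)) − ∇R(y₁)‖ ≤ −L₀/L₁ − ‖∇R(y₁)‖ + (L₀/L₁ + ‖∇R(y₁)‖)·exp(L₁·‖y₂ − y₁‖·t). -/
open Set

theorem stmt_1 {N : ℕ} (R : EuclideanSpace ℝ (Fin N) → ℝ) (L₀ L₁ : ℝ)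
    (hR : ContDiff ℝ 2 R) (hL₀ : 0 ≤ L₀) (hL₁ : 0 < L₁)
    (hsmooth : ∀ θ : EuclideanSpace ℝ (Fin N),
      ‖fderiv ℝ (gradient R) θ‖ ≤ L₀ + L₁ * ‖gradient R θ‖)
    (y₁ y₂ : EuclideanSpace ℝ (Fin N)) (t : ℝ) (ht : t ∈ Set.Icc (0 : ℝ) 1) :
    ‖gradient R ((1 - t) • y₁ + t • y₂) - gradient R y₁‖ ≤
      -(L₀ / L₁) - ‖gradient R y₁‖ +
        (L₀ / L₁ + ‖gradient R y₁‖) * Real.exp (L₁ * ‖y₂ - y₁‖ * t) := by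
  set g := gradient R with hg
  set C : ℝ := L₀ / L₁ + ‖g y₁‖ with hC
  have hC0 : 0 ≤ C := add_nonneg (div_nonneg hL₀ hL₁.le) (norm_nonneg _)
  -- g is C¹
  have hg1 : ContDiff ℝ 1 g := by
    have h1 : ContDiff ℝ 1 (fderiv ℝ R) := hR.fderiv_right (by norm_num)
    exact (InnerProductSpace.toDual ℝ (EuclideanSpace ℝ (Fin N))).symm.contDiff.comp h1
  have hgd : Differentiable ℝ g := hg1.differentiable one_ne_zero
  -- the curve
  set γ : ℝ → EuclideanSpace ℝ (Fin N) := fun s => (1 - s) • y₁ + s • y₂ with hγ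
  have hγd : ∀ s : ℝ, HasDerivAt γ (y₂ - y₁) s := by
    intro s
    have h1 : HasDerivAt (fun s : ℝ => (1 - s) • y₁) (-y₁) s := by
      simpa using (((hasDerivAt_id s).const_sub 1).smul_const y₁)
    have h2 : HasDerivAt (fun s : ℝ => s • y₂) y₂ s := by
      simpa using ((hasDerivAt_id s).smul_const y₂)
    have h3 := h1.add h2
    simp only [neg_add_eq_sub] at h3
    exact h3
  set f : ℝ → EuclideanSpace ℝ (Fin N) := fun s => g (γ s) - g y₁ with hf
  have hfd : ∀ s : ℝ, HasDerivAt f (fderiv ℝ g (γ s) (y₂ - y₁)) s := by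
    intro s
    have := ((hgd (γ s)).hasFDerivAt.comp_hasDerivAt s (hγd s))
    simpa [hf] using this.sub_const (g y₁)
  set K : ℝ := L₁ * ‖y₂ - y₁‖ with hK
  set ε : ℝ := (L₀ + L₁ * ‖g y₁‖) * ‖y₂ - y₁‖ with hε
  have bound : ∀ s ∈ Ico (0:ℝ) 1, ‖fderiv ℝ g (γ s) (y₂ - y₁)‖ ≤ K * ‖f s‖ + ε := by
    intro s _
    calc ‖fderiv ℝ g (γ s) (y₂ - y₁)‖ ≤ ‖fderiv ℝ g (γ s)‖ * ‖y₂ - y₁‖ :=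
          (fderiv ℝ g (γ s)).le_opNorm _
      _ ≤ (L₀ + L₁ * ‖g (γ s)‖) * ‖y₂ - y₁‖ :=
          mul_le_mul_of_nonneg_right (hsmooth (γ s)) (norm_nonneg _)
      _ ≤ (L₀ + L₁ * (‖f s‖ + ‖g y₁‖)) * ‖y₂ - y₁‖ := by
          apply mul_le_mul_of_nonneg_right _ (norm_nonneg _)
          have h' := norm_sub_norm_le (g (γ s)) (g y₁)
          have : ‖g (γ s)‖ ≤ ‖f s‖ + ‖g y₁‖ := by simp only [hf]; linarith
          nlinarith [hL₁.le]
      _ = K * ‖f s‖ + ε := by ring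
  have hgron := norm_le_gronwallBound_of_norm_deriv_right_le (f := f)
    (f' := fun s => fderiv ℝ g (γ s) (y₂ - y₁)) (δ := 0) (K := K) (ε := ε) (a := 0) (b := 1)
    (fun s _ => ((hfd s).continuousAt.continuousWithinAt))
    (fun s _ => (hfd s).hasDerivWithinAt)
    (by simp [hf, hγ]) bound t ht
  rcases eq_or_ne ‖y₂ - y₁‖ 0 with h0 | h0
  · have hy : y₂ = y₁ := by rwa [norm_eq_zero, sub_eq_zero] at h0
    rw [show (1 - t) • y₁ + t • y₂ = y₁ by rw [hy, ← add_smul]; simp]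
    simp [h0]
    rw [hK, h0, hC]
    norm_num
  · have hKne : K ≠ 0 := mul_ne_zero hL₁.ne' h0
    rw [gronwallBound_of_K_ne_0 hKne] at hgron
    have hεK : ε / K = C := by
      field_simp [hK, hε, hC]
      rw [hε, hK, hC]
      have e : L₁ * (L₀ / L₁) = L₀ := by field_simp [hL₁.ne']
      linear_combination (-‖y₂ - y₁‖) * e
    simp only [sub_zero, zero_mul, zero_add] at hgron
    rw [hεK] at hgron
    calc ‖g ((1 - t) • y₁ + t • y₂) - g y₁‖ = ‖f t‖ := rfl
      _ ≤ C * (Real.exp (K * t) - 1) := hgron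
      _ = -(L₀ / L₁) - ‖g y₁‖ + C * Real.exp (L₁ * ‖y₂ - y₁‖ * t) := by
          rw [hC, hK]; ring
end

section
/- If R : ℝ^N → ℝ is twice continuously differentiable and (L₀, L₁)-smooth, then for all y₁, y₂ ∈ ℝ^N: R(y₂) − R(y₁) ≤ ∇R(y₁)·(y₂ − y₁) − (L₀ + L₁‖∇R(y₁)‖)·‖y₂ − y₁‖/L₁ − (L₀ + L₁‖∇R(y₁)‖)/L₁² + (L₀ + L₁‖∇R(y₁)‖)·exp(L₁‖y₂ − y₁‖)/L₁². -/
open Set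

theorem stmt_2 {N : ℕ} (R : EuclideanSpace ℝ (Fin N) → ℝ) (L₀ L₁ : ℝ)
    (hR : ContDiff ℝ 2 R) (hL₀ : 0 ≤ L₀) (hL₁ : 0 < L₁)
    (hsmooth : ∀ θ : EuclideanSpace ℝ (Fin N),
      ‖fderiv ℝ (gradient R) θ‖ ≤ L₀ + L₁ * ‖gradient R θ‖)
    (y₁ y₂ : EuclideanSpace ℝ (Fin N)) :
    R y₂ - R y₁ ≤ (inner ℝ (gradient R y₁) (y₂ - y₁) : ℝ)
      - (L₀ + L₁ * ‖gradient R y₁‖) * ‖y₂ - y₁‖ / L₁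
      - (L₀ + L₁ * ‖gradient R y₁‖) / L₁ ^ 2
      + (L₀ + L₁ * ‖gradient R y₁‖) * Real.exp (L₁ * ‖y₂ - y₁‖) / L₁ ^ 2 := by
  by_cases hv0 : y₂ = y₁
  · subst hv0; simp
  set v := y₂ - y₁ with hvdef
  set A := L₀ + L₁ * ‖gradient R y₁‖ with hAdef
  have hA0 : 0 ≤ A := add_nonneg hL₀ (by positivity)
  have hvpos : 0 < ‖v‖ := norm_pos_iff.mpr (sub_ne_zero.mpr hv0)
  set K := L₁ * ‖v‖ with hKdef
  have hKpos : 0 < K := mul_pos hL₁ hvpos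
  have hgrad : ContDiff ℝ 1 (gradient R) := by
    have h1 : ContDiff ℝ 1 (fderiv ℝ R) := hR.fderiv_right (by norm_num)
    exact ((InnerProductSpace.toDual ℝ (EuclideanSpace ℝ (Fin N))).symm.contDiff).comp h1
  have hRdiff : Differentiable ℝ R := hR.differentiable (by norm_num)
  have hgdiff : Differentiable ℝ (gradient R) := hgrad.differentiable one_ne_zero
  set γ : ℝ → EuclideanSpace ℝ (Fin N) := fun t => y₁ + t • v with hγdef
  have hγ : ∀ t : ℝ, HasDerivAt γ v t := fun t => by
    have := ((hasDerivAt_id t).smul_const v).const_add y₁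
    rw [one_smul] at this; exact this
  have hγ0 : γ 0 = y₁ := by simp [hγdef]
  have hγ1 : γ 1 = y₂ := by simp [hγdef, hvdef]
  set f : ℝ → EuclideanSpace ℝ (Fin N) := fun t => gradient R (γ t) - gradient R y₁ with hfdef
  have hf' : ∀ t : ℝ, HasDerivAt f (fderiv ℝ (gradient R) (γ t) v) t := fun t =>
    (((hgdiff (γ t)).hasFDerivAt).comp_hasDerivAt t (hγ t)).sub_const _
  -- Grönwall bound
  have hbound : ∀ t ∈ Icc (0:ℝ) 1, ‖f t‖ ≤ A / L₁ * (Real.exp (K * t) - 1) := by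
    intro t ht
    have hb := norm_le_gronwallBound_of_norm_deriv_right_le
      (f := f) (f' := fun s => fderiv ℝ (gradient R) (γ s) v) (a := 0) (b := 1)
      (δ := 0) (K := K) (ε := A * ‖v‖)
      (fun s _ => (hf' s).continuousAt.continuousWithinAt)
      (fun s _ => (hf' s).hasDerivWithinAt)
      (by simp [hfdef, hγ0])
      (fun s _ => by
        have h1 : ‖fderiv ℝ (gradient R) (γ s) v‖ ≤ ‖fderiv ℝ (gradient R) (γ s)‖ * ‖v‖ :=
          (fderiv ℝ (gradient R) (γ s)).le_opNorm v
        have h2 := hsmooth (γ s)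
        have h3 : ‖gradient R (γ s)‖ ≤ ‖gradient R y₁‖ + ‖f s‖ := by
          have := norm_add_le (gradient R y₁) (f s)
          simpa [hfdef] using this
        calc ‖fderiv ℝ (gradient R) (γ s) v‖
            ≤ (L₀ + L₁ * ‖gradient R (γ s)‖) * ‖v‖ := h1.trans
              (mul_le_mul_of_nonneg_right h2 (norm_nonneg v))
          _ ≤ (L₀ + L₁ * (‖gradient R y₁‖ + ‖f s‖)) * ‖v‖ := by
              apply mul_le_mul_of_nonneg_right _ (norm_nonneg v)
              have := mul_le_mul_of_nonneg_left h3 hL₁.le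
              linarith
          _ = K * ‖f s‖ + A * ‖v‖ := by rw [hKdef, hAdef]; ring)
      t ht
    rw [gronwallBound_of_K_ne_0 hKpos.ne'] at hb
    have : A * ‖v‖ / K = A / L₁ := by
      rw [hKdef]; field_simp
    rw [this] at hb
    simpa using hb
  -- derivative of R along the path
  have hg' : ∀ t : ℝ, HasDerivAt (fun s => R (γ s)) (inner ℝ (gradient R (γ t)) v : ℝ) t := by
    intro t
    have h1 := ((hRdiff (γ t)).hasFDerivAt).comp_hasDerivAt t (hγ t)
    have h2 : (inner ℝ (gradient R (γ t)) v : ℝ) = fderiv ℝ R (γ t) v :=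
      InnerProductSpace.toDual_symm_apply
    rw [h2]; exact h1
  set C : ℝ := inner ℝ (gradient R y₁) v with hCdef
  set F : ℝ → ℝ := fun t =>
    C * t + A / L₁ * ‖v‖ * ((Real.exp (K * t) - 1) / K - t) - R (γ t) with hFdef
  have hF' : ∀ t : ℝ, HasDerivAt F
      (C + A / L₁ * ‖v‖ * (Real.exp (K * t) - 1) - (inner ℝ (gradient R (γ t)) v : ℝ)) t := by
    intro t
    have hexp : HasDerivAt (fun s : ℝ => Real.exp (K * s)) (Real.exp (K * t) * K) t := by
      exact (Real.hasDerivAt_exp (K * t)).comp t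
        (by simpa using (hasDerivAt_id t).const_mul K)
    have h1 : HasDerivAt (fun s : ℝ => (Real.exp (K * s) - 1) / K - s)
        ((Real.exp (K * t) * K) / K - 1) t :=
      (((hexp.sub_const 1).div_const K).sub (hasDerivAt_id t))
    have h2 := (((hasDerivAt_id t).const_mul C).add
      (h1.const_mul (A / L₁ * ‖v‖))).sub (hg' t)
    exact h2.congr_deriv (by rw [mul_div_cancel_right₀ _ hKpos.ne']; ring)
  have hmono : MonotoneOn F (Icc (0:ℝ) 1) := by
    apply monotoneOn_of_deriv_nonneg (convex_Icc 0 1)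
      (fun t _ => (hF' t).continuousAt.continuousWithinAt)
      (fun t _ => ((hF' t).differentiableAt).differentiableWithinAt)
    intro t ht
    rw [interior_Icc] at ht
    rw [(hF' t).deriv]
    have hft := hbound t (Ioo_subset_Icc_self ht)
    have hinner : (inner ℝ (gradient R (γ t)) v : ℝ) ≤ C + ‖f t‖ * ‖v‖ := by
      have h1 : (inner ℝ (gradient R (γ t)) v : ℝ) = C + (inner ℝ (f t) v : ℝ) := by
        rw [hCdef, hfdef]
        simp [inner_sub_left]
      rw [h1]
      have := real_inner_le_norm (f t) v
      linarith
    have h2 : ‖f t‖ * ‖v‖ ≤ A / L₁ * (Real.exp (K * t) - 1) * ‖v‖ :=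
      mul_le_mul_of_nonneg_right hft (norm_nonneg v)
    have h3 : A / L₁ * (Real.exp (K * t) - 1) * ‖v‖ = A / L₁ * ‖v‖ * (Real.exp (K * t) - 1) := by
      ring
    linarith [h3 ▸ h2]
  have hF01 : F 0 ≤ F 1 := hmono (by norm_num) (by norm_num) (by norm_num)
  have hF0 : F 0 = -R y₁ := by simp [hFdef, hγ0]
  have hF1 : F 1 = C + A / L₁ * ‖v‖ * ((Real.exp K - 1) / K - 1) - R y₂ := by
    simp [hFdef, hγ1]
  rw [hF0, hF1] at hF01
  have hkey : A / L₁ * ‖v‖ * ((Real.exp K - 1) / K - 1)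
      = -(A * ‖v‖ / L₁) - A / L₁ ^ 2 + A * Real.exp K / L₁ ^ 2 := by
    rw [hKdef]
    field_simp
    ring
  rw [hKdef] at hF01 hkey
  linarith [hkey ▸ hF01]
end

section
/- Let R be twice continuously differentiable and (L₀, L₁)-smooth with L₀ > 0, L₁ > 0, let λ ∈ (0,1), and let θ ∈ ℝ^N with ∇R(θ) ≠ 0. Define η̃ = (1/(L₁‖∇R(θ)‖))·ln((L₀ + L₁(2−λ)‖∇R(θ)‖)/(L₀ + L₁‖∇R(θ)‖)). Then for every η with 0 < η ≤ η̃, the Armijo condition R(θ − η∇R(θ)) − R(θ) ≤ −λ·η·‖∇R(θ)‖² holds. -/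
open Real Set

theorem stmt_3 {N : ℕ} (R : EuclideanSpace ℝ (Fin N) → ℝ) (L₀ L₁ lam : ℝ)
    (hR : ContDiff ℝ 2 R) (hL₀ : 0 < L₀) (hL₁ : 0 < L₁)
    (hlam : lam ∈ Set.Ioo (0 : ℝ) 1)
    (hsmooth : ∀ θ : EuclideanSpace ℝ (Fin N),
      ‖fderiv ℝ (gradient R) θ‖ ≤ L₀ + L₁ * ‖gradient R θ‖)
    (θ : EuclideanSpace ℝ (Fin N)) (hθ : gradient R θ ≠ 0) (η : ℝ) (hη : 0 < η)
    (hη' : η ≤ (1 / (L₁ * ‖gradient R θ‖)) *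
      Real.log ((L₀ + L₁ * (2 - lam) * ‖gradient R θ‖) / (L₀ + L₁ * ‖gradient R θ‖))) :
    R (θ - η • gradient R θ) - R θ ≤ -lam * η * ‖gradient R θ‖ ^ 2 := by
  obtain ⟨hlam0, hlam1⟩ := hlam
  set g : EuclideanSpace ℝ (Fin N) := gradient R θ with hgdef
  set G : ℝ := ‖g‖ with hGdef
  have hG0 : 0 < G := norm_pos_iff.mpr hθ
  -- gradient R is C¹
  have hgrad : ContDiff ℝ 1 (gradient R) := by
    have h1 : ContDiff ℝ 1 (fderiv ℝ R) := hR.fderiv_right (by norm_num)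
    exact ((InnerProductSpace.toDual ℝ
      (EuclideanSpace ℝ (Fin N))).symm.contDiff.comp h1 : _)
  have hgd : Differentiable ℝ (gradient R) := hgrad.differentiable one_ne_zero
  have hRd : Differentiable ℝ R := hR.differentiable (by norm_num)
  -- the path
  have hγ : ∀ t : ℝ, HasDerivAt (fun t : ℝ => θ - t • g) (-g) t := by
    intro t
    simpa using ((hasDerivAt_id t).smul_const g).const_sub θ
  set F : ℝ → EuclideanSpace ℝ (Fin N) :=
    fun t => gradient R (θ - t • g) - g with hFdef
  have hF' : ∀ t : ℝ, HasDerivAt F (fderiv ℝ (gradient R) (θ - t • g) (-g)) t := by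
    intro t
    exact (((hgd (θ - t • g)).hasFDerivAt.comp_hasDerivAt t (hγ t)).sub_const g)
  have hγc : Continuous (fun t : ℝ => θ - t • g) :=
    continuous_const.sub (continuous_id.smul continuous_const)
  have hFcont : Continuous F := (hgrad.continuous.comp hγc).sub continuous_const
  have hbound : ∀ t : ℝ, ‖fderiv ℝ (gradient R) (θ - t • g) (-g)‖ ≤
      (G * L₁) * ‖F t‖ + G * (L₀ + L₁ * G) := by
    intro t
    have h1 : ‖fderiv ℝ (gradient R) (θ - t • g) (-g)‖ ≤
        (L₀ + L₁ * ‖gradient R (θ - t • g)‖) * G := by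
      calc ‖fderiv ℝ (gradient R) (θ - t • g) (-g)‖
          ≤ ‖fderiv ℝ (gradient R) (θ - t • g)‖ * ‖-g‖ :=
            ContinuousLinearMap.le_opNorm _ _
        _ ≤ (L₀ + L₁ * ‖gradient R (θ - t • g)‖) * G := by
            rw [norm_neg]
            exact mul_le_mul_of_nonneg_right (hsmooth _) (norm_nonneg _)
    have h2 : ‖gradient R (θ - t • g)‖ ≤ ‖F t‖ + G := by
      have := norm_sub_norm_le (gradient R (θ - t • g)) g
      simp only [hFdef] at *
      linarith
    have h3 := mul_le_mul_of_nonneg_left h2 (by positivity : (0:ℝ) ≤ G * L₁)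
    nlinarith [norm_nonneg (F t)]
  have hgron : ∀ t ∈ Icc (0:ℝ) η, ‖F t‖ ≤
      gronwallBound 0 (G * L₁) (G * (L₀ + L₁ * G)) t := by
    intro t ht
    have := norm_le_gronwallBound_of_norm_deriv_right_le
      (f := F) (f' := fun t => fderiv ℝ (gradient R) (θ - t • g) (-g))
      (δ := 0) (K := G * L₁) (ε := G * (L₀ + L₁ * G)) (a := 0) (b := η)
      hFcont.continuousOn
      (fun x _ => (hF' x).hasDerivWithinAt)
      (by simp [hFdef, hgdef]) (fun x _ => hbound x) t ht
    simpa using this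
  -- numeric bound: gronwallBound ≤ (1 - lam) * G on [0, η]
  have hKne : G * L₁ ≠ 0 := by positivity
  have hratio_pos : (0:ℝ) < (L₀ + L₁ * (2 - lam) * G) / (L₀ + L₁ * G) := by
    have ha : (0:ℝ) < L₀ + L₁ * (2 - lam) * G := by nlinarith [mul_pos hL₁ hG0]
    have hb : (0:ℝ) < L₀ + L₁ * G := by nlinarith [mul_pos hL₁ hG0]
    positivity
  have hexp : ∀ t ∈ Icc (0:ℝ) η, Real.exp (G * L₁ * t) ≤
      (L₀ + L₁ * (2 - lam) * G) / (L₀ + L₁ * G) := by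
    intro t ht
    have h1 : G * L₁ * t ≤ Real.log ((L₀ + L₁ * (2 - lam) * G) / (L₀ + L₁ * G)) := by
      have h2 : t ≤ η := ht.2
      have h3 : L₁ * G * η ≤ Real.log ((L₀ + L₁ * (2 - lam) * G) / (L₀ + L₁ * G)) := by
        have hpos : 0 < L₁ * G := by positivity
        calc L₁ * G * η ≤ L₁ * G * ((1 / (L₁ * G)) *
              Real.log ((L₀ + L₁ * (2 - lam) * G) / (L₀ + L₁ * G))) := by
                exact mul_le_mul_of_nonneg_left hη' hpos.le
          _ = Real.log ((L₀ + L₁ * (2 - lam) * G) / (L₀ + L₁ * G)) := by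
              field_simp
      nlinarith [mul_le_mul_of_nonneg_left h2 (mul_pos hG0 hL₁).le]
    calc Real.exp (G * L₁ * t) ≤ Real.exp (Real.log _) := Real.exp_le_exp.mpr h1
      _ = _ := Real.exp_log hratio_pos
  have hFb : ∀ t ∈ Icc (0:ℝ) η, ‖F t‖ ≤ (1 - lam) * G := by
    intro t ht
    have h1 := hgron t ht
    rw [gronwallBound_of_K_ne_0 hKne] at h1
    simp only [zero_mul, zero_add] at h1
    have h2 := hexp t ht
    have hden : (0:ℝ) < L₀ + L₁ * G := by nlinarith
    have h3 : G * (L₀ + L₁ * G) / (G * L₁) * (Real.exp (G * L₁ * t) - 1) ≤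
        G * (L₀ + L₁ * G) / (G * L₁) *
          ((L₀ + L₁ * (2 - lam) * G) / (L₀ + L₁ * G) - 1) := by
      apply mul_le_mul_of_nonneg_left (by linarith) (by positivity)
    have h4 : G * (L₀ + L₁ * G) / (G * L₁) *
        ((L₀ + L₁ * (2 - lam) * G) / (L₀ + L₁ * G) - 1) = (1 - lam) * G := by
      field_simp
      ring
    linarith
  -- the inner product bound on the derivative of t ↦ R (θ - t • g)
  have hRderiv : ∀ t : ℝ, HasDerivAt (fun t : ℝ => R (θ - t • g))
      (fderiv ℝ R (θ - t • g) (-g)) t := by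
    intro t
    exact (hRd (θ - t • g)).hasFDerivAt.comp_hasDerivAt t (hγ t)
  have hinner : ∀ x : EuclideanSpace ℝ (Fin N), DifferentiableAt ℝ R x →
      ∀ v, fderiv ℝ R x v = inner ℝ (gradient R x) v := by
    intro x hx v
    rw [gradient, ← InnerProductSpace.toDual_apply_apply]
    rw [LinearIsometryEquiv.apply_symm_apply]
  have hderiv_le : ∀ t ∈ Icc (0:ℝ) η, fderiv ℝ R (θ - t • g) (-g) ≤ -lam * G ^ 2 := by
    intro t ht
    rw [hinner _ (hRd _)]
    have h1 : (inner ℝ (gradient R (θ - t • g)) (-g) : ℝ)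
        = -(inner ℝ g g : ℝ) - inner ℝ (F t) g := by
      simp only [hFdef]
      rw [inner_neg_right, inner_sub_left]
      ring
    rw [h1]
    have h2 : (inner ℝ g g : ℝ) = G ^ 2 := real_inner_self_eq_norm_sq g
    have h3 : -(inner ℝ (F t) g : ℝ) ≤ ‖F t‖ * G := by
      have := real_inner_le_norm (F t) g
      have := abs_real_inner_le_norm (F t) g
      nlinarith [neg_abs_le (inner ℝ (F t) g : ℝ), abs_real_inner_le_norm (F t) g]
    have h4 := hFb t ht
    nlinarith
  -- antitone argument
  set ψ : ℝ → ℝ := fun t => R (θ - t • g) + lam * G ^ 2 * t with hψdef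
  have hψ' : ∀ t : ℝ, HasDerivAt ψ (fderiv ℝ R (θ - t • g) (-g) + lam * G ^ 2) t := by
    intro t
    have h := (hRderiv t).add ((hasDerivAt_id t).const_mul (lam * G ^ 2))
    rw [mul_one] at h
    exact h
  have hanti : AntitoneOn ψ (Icc 0 η) := by
    apply antitoneOn_of_deriv_nonpos (convex_Icc 0 η)
    · exact ((hRd.continuous.comp hγc).add
        ((continuous_const.mul continuous_id))).continuousOn
    · intro x hx
      exact (hψ' x).differentiableAt.differentiableWithinAt
    · intro x hx
      rw [interior_Icc] at hx
      rw [(hψ' x).deriv]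
      have := hderiv_le x ⟨hx.1.le, hx.2.le⟩
      linarith
  have := hanti (left_mem_Icc.mpr hη.le) (right_mem_Icc.mpr hη.le) hη.le
  simp only [hψdef, zero_smul, sub_zero, mul_zero, add_zero] at this
  linarith
end

section
/- Let R be (L₀, L₁)-smooth with L₀ > 0, L₁ > 0, lower bounded by R*, λ ∈ (0,1), f₁ > 1, and let (θₙ) be a sequence with R(θ_{k+1}) ≤ R(θ_k) such that at each iteration k the step ηₖ found by the backtracking satisfies ηₖ ≥ η̃ₖ/f₁ where η̃ₖ = (1/(L₁‖∇R(θₖ)‖))·ln((L₀ + L₁(2−λ)‖∇R(θₖ)‖)/(L₀ + L₁‖∇R(θₖ)‖)), and the Armijo condition R(θ_{k+1}) − R(θ_k) ≤ −ληₖ‖∇R(θₖ)‖² holds. Then for any ε > 0, if n ≥ f₁·L₁·(R(θ₀) − R*)/(λ·ε·ln((L₀ + L₁(2−λ)ε)/(L₀ + L₁ε))), there exists k ≤ n with ‖∇R(θₖ)‖ ≤ ε. -/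
theorem stmt_4 {N : ℕ} (R : EuclideanSpace ℝ (Fin N) → ℝ) (L₀ L₁ lam f₁ Rstar : ℝ)
    (hR : ContDiff ℝ 2 R) (hL₀ : 0 < L₀) (hL₁ : 0 < L₁)
    (hlam : lam ∈ Set.Ioo (0 : ℝ) 1) (hf₁ : 1 < f₁)
    (hsmooth : ∀ θ : EuclideanSpace ℝ (Fin N),
      ‖fderiv ℝ (gradient R) θ‖ ≤ L₀ + L₁ * ‖gradient R θ‖)
    (hbound : ∀ θ, Rstar ≤ R θ)
    (θ : ℕ → EuclideanSpace ℝ (Fin N)) (η : ℕ → ℝ)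
    (hrec : ∀ k, θ (k + 1) = θ k - η k • gradient R (θ k))
    (hdec : ∀ k, R (θ (k + 1)) ≤ R (θ k))
    (hstep : ∀ k, η k ≥ (1 / f₁) * (1 / (L₁ * ‖gradient R (θ k)‖)) *
      Real.log ((L₀ + L₁ * (2 - lam) * ‖gradient R (θ k)‖) /
        (L₀ + L₁ * ‖gradient R (θ k)‖)))
    (harmijo : ∀ k, R (θ (k + 1)) - R (θ k) ≤ -lam * η k * ‖gradient R (θ k)‖ ^ 2)
    (ε : ℝ) (hε : 0 < ε) (n : ℕ)
    (hn : (n : ℝ) ≥ f₁ * L₁ * (R (θ 0) - Rstar) /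
      (lam * ε * Real.log ((L₀ + L₁ * (2 - lam) * ε) / (L₀ + L₁ * ε)))) :
    ∃ k ≤ n, ‖gradient R (θ k)‖ ≤ ε := by
  obtain ⟨hlam0, hlam1⟩ := hlam
  by_contra hcon
  push_neg at hcon
  set B := Real.log ((L₀ + L₁ * (2 - lam) * ε) / (L₀ + L₁ * ε)) with hB
  have hden : 0 < L₀ + L₁ * ε := by positivity
  have hBpos : 0 < B := by
    apply Real.log_pos
    rw [lt_div_iff₀ hden]
    nlinarith [mul_pos (sub_pos.mpr hlam1) hε]
  set c := lam * ε * B / (f₁ * L₁) with hc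
  have hf₁0 : 0 < f₁ := by linarith
  have hcpos : 0 < c := by positivity
  -- per-step decrease
  have step : ∀ k ≤ n, R (θ (k + 1)) ≤ R (θ k) - c := by
    intro k hk
    have hg : ε < ‖gradient R (θ k)‖ := hcon k hk
    set g := ‖gradient R (θ k)‖ with hgdef
    have hg0 : 0 < g := lt_trans hε hg
    have hdeng : 0 < L₀ + L₁ * g := by positivity
    set A := Real.log ((L₀ + L₁ * (2 - lam) * g) / (L₀ + L₁ * g)) with hA
    have hBA : B ≤ A := by
      apply Real.log_le_log (div_pos (by nlinarith [mul_pos (sub_pos.mpr hlam1) hε]) hden)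
      rw [div_le_div_iff₀ hden hdeng]
      nlinarith [mul_nonneg (mul_nonneg (mul_pos hL₀ hL₁).le (sub_pos.mpr hlam1).le) (sub_nonneg.mpr hg.le)]
    have hη := hstep k
    have hη' : A ≤ η k * (f₁ * (L₁ * g)) := by
      have : (1 / f₁) * (1 / (L₁ * g)) * A ≤ η k := hη
      have h2 : A / (f₁ * (L₁ * g)) ≤ η k := by
        rw [div_le_iff₀ (by positivity)]
        calc A = (1 / f₁) * (1 / (L₁ * g)) * A * (f₁ * (L₁ * g)) := by
              field_simp
          _ ≤ η k * (f₁ * (L₁ * g)) := by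
              apply mul_le_mul_of_nonneg_right this (by positivity)
      rwa [div_le_iff₀ (by positivity)] at h2
    have har := harmijo k
    have key : c ≤ lam * η k * g ^ 2 := by
      rw [hc, div_le_iff₀ (by positivity)]
      have h1 : ε * B ≤ g * A := mul_le_mul hg.le hBA hBpos.le hg0.le
      have h2 : lam * (g * A) ≤ lam * (g * (η k * (f₁ * (L₁ * g)))) := by
        apply mul_le_mul_of_nonneg_left _ hlam0.le
        exact mul_le_mul_of_nonneg_left hη' hg0.le
      nlinarith
    linarith
  -- telescoping
  have tele : ∀ m, m ≤ n + 1 → R (θ m) ≤ R (θ 0) - m * c := by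
    intro m
    induction m with
    | zero => intro _; simp
    | succ m ih =>
      intro hm
      have h1 := step m (by omega)
      have h2 := ih (by omega)
      push_cast
      linarith
  have hfinal := tele (n + 1) le_rfl
  have hlow := hbound (θ (n + 1))
  have hΔ : Rstar ≤ R (θ 0) := hbound (θ 0) |>.trans (le_refl _) |>.trans (le_refl _)
  have hn' : f₁ * L₁ * (R (θ 0) - Rstar) ≤ (n : ℝ) * (lam * ε * B) := by
    rw [ge_iff_le, div_le_iff₀ (by positivity)] at hn
    linarith
  have hcc : c * (f₁ * L₁) = lam * ε * B := by
    rw [hc]; field_simp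
  have hnc : R (θ 0) - Rstar ≤ (n : ℝ) * c := by
    nlinarith [mul_pos hf₁0 hL₁]
  push_cast at hfinal
  nlinarith
end

section
/- The function z ↦ z·ln((L₀ + L₁(2−λ)z)/(L₀ + L₁z)) is monotone increasing on [0, ∞) when L₀ > 0, L₁ > 0 and λ ∈ (0,1). -/
theorem stmt_6 (L₀ L₁ lam : ℝ) (hL₀ : 0 < L₀) (hL₁ : 0 < L₁)
    (hlam : lam ∈ Set.Ioo (0 : ℝ) 1) :
    MonotoneOn (fun z : ℝ =>
      z * Real.log ((L₀ + L₁ * (2 - lam) * z) / (L₀ + L₁ * z))) (Set.Ici 0) := by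
  obtain ⟨h0, h1⟩ := hlam
  have hden : ∀ z : ℝ, 0 ≤ z → 0 < L₀ + L₁ * z := fun z hz => by nlinarith
  have hnum : ∀ z : ℝ, 0 ≤ z → 0 < L₀ + L₁ * (2 - lam) * z := fun z hz => by
    nlinarith [mul_nonneg (mul_nonneg hL₁.le (by linarith : (0:ℝ) ≤ 2 - lam)) hz]
  have hge1 : ∀ z : ℝ, 0 ≤ z → 1 ≤ (L₀ + L₁ * (2 - lam) * z) / (L₀ + L₁ * z) := by
    intro z hz
    rw [le_div_iff₀ (hden z hz)]
    nlinarith [mul_nonneg (mul_nonneg hL₁.le (by linarith : (0:ℝ) ≤ 1 - lam)) hz]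
  intro x hx y hy hxy
  simp only [Set.mem_Ici] at hx hy
  have hlog : Real.log ((L₀ + L₁ * (2 - lam) * x) / (L₀ + L₁ * x)) ≤
      Real.log ((L₀ + L₁ * (2 - lam) * y) / (L₀ + L₁ * y)) := by
    apply Real.log_le_log (div_pos (hnum x hx) (hden x hx))
    rw [div_le_div_iff₀ (hden x hx) (hden y hy)]
    nlinarith [mul_nonneg (mul_nonneg (mul_pos hL₀ hL₁).le
      (by linarith : (0:ℝ) ≤ 1 - lam)) (by linarith : (0:ℝ) ≤ y - x)]
  exact mul_le_mul hxy hlog (Real.log_nonneg (hge1 x hx)) hy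
end

section
/- Let R : ℝ^N → ℝ be differentiable with ∇R L-Lipschitz on a convex set containing θ and θ − η∇R(θ), and let λ ∈ (0,1). If 0 < η ≤ 2(1−λ)/((1+2λ)·L), then R(θ − η∇R(θ)) − R(θ) ≤ −λ·η·‖∇R(θ)‖·‖∇R(θ − η∇R(θ))‖. -/
open InnerProductSpace

lemma descent_aux {N : ℕ} (R : EuclideanSpace ℝ (Fin N) → ℝ) (L : ℝ)
    (hR : Differentiable ℝ R) (hL : 0 ≤ L)
    (s : Set (EuclideanSpace ℝ (Fin N))) (hs : Convex ℝ s)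
    (hlip : LipschitzOnWith (Real.toNNReal L) (gradient R) s)
    (x y : EuclideanSpace ℝ (Fin N)) (hx : x ∈ s) (hy : y ∈ s) :
    R y ≤ R x + ⟪gradient R x, y - x⟫_ℝ + L / 2 * ‖y - x‖ ^ 2 := by
  set v := y - x with hv
  have key : ∀ p w, fderiv ℝ R p w = ⟪gradient R p, w⟫_ℝ := by
    intro p w
    rw [gradient, ← InnerProductSpace.toDual_apply_apply,
      LinearIsometryEquiv.apply_symm_apply]
  set ψ : ℝ → ℝ := fun t => R (x + t • v) - t * ⟪gradient R x, v⟫_ℝ - L / 2 * t ^ 2 * ‖v‖ ^ 2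
    with hψ
  have hline : ∀ t : ℝ, HasDerivAt (fun t : ℝ => x + t • v) v t := by
    intro t
    simpa using ((hasDerivAt_id t).smul_const v).const_add x
  have hd : ∀ t : ℝ, HasDerivAt ψ
      (⟪gradient R (x + t • v), v⟫_ℝ - ⟪gradient R x, v⟫_ℝ - L * t * ‖v‖ ^ 2) t := by
    intro t
    have h1 : HasDerivAt (fun t : ℝ => R (x + t • v)) (fderiv ℝ R (x + t • v) v) t :=
      (hR (x + t • v)).hasFDerivAt.comp_hasDerivAt t (hline t)
    rw [key] at h1
    have h2 : HasDerivAt (fun t : ℝ => t * ⟪gradient R x, v⟫_ℝ) ⟪gradient R x, v⟫_ℝ t := by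
      simpa using (hasDerivAt_id t).mul_const ⟪gradient R x, v⟫_ℝ
    have h3 : HasDerivAt (fun t : ℝ => L / 2 * t ^ 2 * ‖v‖ ^ 2) (L * t * ‖v‖ ^ 2) t := by
      have := ((hasDerivAt_pow 2 t).const_mul (L / 2)).mul_const (‖v‖ ^ 2)
      exact this.congr_deriv (by rw [show (2:ℕ) - 1 = 1 from rfl]; ring)
    exact (h1.sub h2).sub h3
  have hmem : ∀ t ∈ Set.Icc (0 : ℝ) 1, x + t • v ∈ s := by
    intro t ht
    have := hs hx hy (by linarith [ht.2] : (0:ℝ) ≤ 1 - t) ht.1 (by ring)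
    convert this using 1
    simp [hv]
    module
  have hψle : ψ 1 ≤ ψ 0 := by
    refine antitoneOn_of_deriv_nonpos (convex_Icc 0 1) ?_ ?_ ?_ (Set.left_mem_Icc.2 one_pos.le)
      (Set.right_mem_Icc.2 one_pos.le) one_pos.le
    · exact fun t _ => ((hd t).continuousAt).continuousWithinAt
    · exact fun t _ => ((hd t).differentiableAt).differentiableWithinAt
    · intro t ht
      rw [interior_Icc] at ht
      rw [(hd t).deriv]
      have hmem' : x + t • v ∈ s := hmem t ⟨ht.1.le, ht.2.le⟩
      have hdist : dist (x + t • v) x ≤ t * ‖v‖ := by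
        rw [dist_eq_norm]
        simp [norm_smul, abs_of_pos ht.1]
      have hlipb : ‖gradient R (x + t • v) - gradient R x‖ ≤ L * (t * ‖v‖) := by
        have := hlip.dist_le_mul _ hmem' _ hx
        rw [dist_eq_norm] at this
        calc ‖gradient R (x + t • v) - gradient R x‖ ≤ L.toNNReal * dist (x + t • v) x := this
          _ ≤ L * (t * ‖v‖) := by
              rw [Real.coe_toNNReal _ hL]
              exact mul_le_mul_of_nonneg_left hdist hL
      have hip : ⟪gradient R (x + t • v) - gradient R x, v⟫_ℝ ≤ L * t * ‖v‖ ^ 2 := by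
        calc ⟪gradient R (x + t • v) - gradient R x, v⟫_ℝ
            ≤ ‖gradient R (x + t • v) - gradient R x‖ * ‖v‖ := real_inner_le_norm _ _
          _ ≤ L * (t * ‖v‖) * ‖v‖ := by
              exact mul_le_mul_of_nonneg_right hlipb (norm_nonneg _)
          _ = L * t * ‖v‖ ^ 2 := by ring
      rw [inner_sub_left] at hip
      linarith
  have h0 : ψ 0 = R x := by simp [hψ]
  have h1 : ψ 1 = R y - ⟪gradient R x, v⟫_ℝ - L / 2 * ‖v‖ ^ 2 := by
    simp [hψ, hv]
  rw [h0, h1] at hψle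
  linarith

theorem stmt_7 {N : ℕ} (R : EuclideanSpace ℝ (Fin N) → ℝ) (L lam η : ℝ)
    (hR : Differentiable ℝ R) (hL : 0 < L) (hlam : lam ∈ Set.Ioo (0 : ℝ) 1)
    (s : Set (EuclideanSpace ℝ (Fin N))) (hs : Convex ℝ s)
    (θ : EuclideanSpace ℝ (Fin N)) (hθ : θ ∈ s)
    (hθ' : θ - η • gradient R θ ∈ s)
    (hlip : LipschitzOnWith (Real.toNNReal L) (gradient R) s)
    (hη : 0 < η) (hη' : η ≤ 2 * (1 - lam) / ((1 + 2 * lam) * L)) :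
    R (θ - η • gradient R θ) - R θ ≤
      -lam * η * ‖gradient R θ‖ * ‖gradient R (θ - η • gradient R θ)‖ := by
  obtain ⟨hlam0, hlam1⟩ := hlam
  set g := gradient R θ with hg
  set y := θ - η • g with hy
  set g' := gradient R y with hg'
  have hdesc := descent_aux R L hR hL.le s hs hlip θ y hθ hθ'
  have hsub : y - θ = -(η • g) := by rw [hy]; abel
  have hnorm : ‖y - θ‖ = η * ‖g‖ := by
    rw [hsub, norm_neg, norm_smul, Real.norm_eq_abs, abs_of_pos hη]
  have hinner : ⟪g, y - θ⟫_ℝ = -(η * ‖g‖ ^ 2) := by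
    rw [hsub, inner_neg_right, real_inner_smul_right, real_inner_self_eq_norm_sq]
  rw [hinner, hnorm] at hdesc
  -- bound on ‖g'‖
  have hgb : ‖g' - g‖ ≤ L * (η * ‖g‖) := by
    have := hlip.dist_le_mul _ hθ' _ hθ
    rw [dist_eq_norm] at this
    calc ‖g' - g‖ ≤ L.toNNReal * dist y θ := this
      _ = L * (η * ‖g‖) := by
          rw [Real.coe_toNNReal _ hL.le, dist_eq_norm, hnorm]
  have hgb' : ‖g'‖ ≤ ‖g‖ + L * (η * ‖g‖) := by
    calc ‖g'‖ = ‖g + (g' - g)‖ := by rw [show g + (g' - g) = g' by abel]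
      _ ≤ ‖g‖ + ‖g' - g‖ := norm_add_le _ _
      _ ≤ ‖g‖ + L * (η * ‖g‖) := by linarith
  have hηb : η * ((1 + 2 * lam) * L) ≤ 2 * (1 - lam) := by
    have hpos : 0 < (1 + 2 * lam) * L := by positivity
    rw [le_div_iff₀ hpos] at hη'
    linarith
  have hgnn : (0:ℝ) ≤ ‖g‖ := norm_nonneg _
  have hg'nn : (0:ℝ) ≤ ‖g'‖ := norm_nonneg _
  nlinarith [mul_nonneg (mul_nonneg hη.le hgnn) hgnn,
    mul_le_mul_of_nonneg_left hgb' (mul_nonneg (mul_nonneg hlam0.le hη.le) hgnn),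
    mul_nonneg (mul_nonneg (mul_nonneg hη.le hη.le) hgnn) hgnn,
    mul_le_mul_of_nonneg_right hηb (mul_nonneg hgnn hgnn),
    mul_le_mul_of_nonneg_right (mul_le_mul_of_nonneg_right hηb hgnn) (mul_nonneg hgnn hη.le)]
end

section
/- Let (θₖ)_{p≤k≤q} satisfy the Armijo inequality R(θₖ) − R(θ_{k+1}) ≥ λ·ηₖ·‖∇R(θₖ)‖·‖∇R(θ_{k+1})‖ with θ_{k+1} = θₖ − ηₖ∇R(θₖ), and suppose φ : [0,∞) → [0,∞) is increasing, concave, differentiable on (0,∞), with φ'(R* − R(θ))·‖∇R(θ)‖ ≥ 1 along the iterates, where R* is a fixed value with R(θₖ) < R* for p ≤ k ≤ q. Then Σ_{k=p}^{q−1} ‖θ_{k+1} − θₖ‖ ≤ (1/λ)·(φ(R* − R(θ_q)) − φ(R* − R(θ_p))) ≤ (1/λ)·φ(R(θ_p) − R(θ_q)). -/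
/-- Subadditivity of a concave nonnegative function on `[0, ∞)`. -/
lemma concave_subadd {φ : ℝ → ℝ} (hφconc : ConcaveOn ℝ (Set.Ici 0) φ)
    (hφnonneg : ∀ x ∈ Set.Ici (0 : ℝ), 0 ≤ φ x) {x y : ℝ} (hx : 0 ≤ x) (hy : 0 ≤ y) :
    φ (x + y) ≤ φ x + φ y := by
  have h0mem : (0:ℝ) ∈ Set.Ici (0:ℝ) := Set.mem_Ici.2 le_rfl
  have h00 : 0 ≤ φ 0 := hφnonneg 0 h0mem
  rcases eq_or_lt_of_le (add_nonneg hx hy) with h | h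
  · have hx0 : x = 0 := by linarith
    have hy0 : y = 0 := by linarith
    simp [hx0, hy0]; linarith
  · set s := x + y with hs
    have hsmem : s ∈ Set.Ici (0:ℝ) := Set.mem_Ici.2 h.le
    have hxs0 : (0:ℝ) ≤ x / s := by positivity
    have hys0 : (0:ℝ) ≤ y / s := by positivity
    have hsum1 : x / s + y / s = 1 := by field_simp; linarith
    have hsum1' : y / s + x / s = 1 := by rw [add_comm]; exact hsum1
    have hx' : φ x ≥ (x / s) * φ s := by
      have h2 := hφconc.2 hsmem h0mem hxs0 hys0 hsum1
      have hxs : (x / s) • s + (y / s) • (0:ℝ) = x := by rw [smul_eq_mul, smul_eq_mul, mul_zero, add_zero]; field_simp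
      rw [hxs] at h2
      have h3 : (x / s) * φ s + (y / s) * φ 0 ≤ φ x := by simpa [smul_eq_mul] using h2
      nlinarith [mul_nonneg hys0 h00]
    have hy' : φ y ≥ (y / s) * φ s := by
      have h2 := hφconc.2 hsmem h0mem hys0 hxs0 hsum1'
      have hys : (y / s) • s + (x / s) • (0:ℝ) = y := by rw [smul_eq_mul, smul_eq_mul, mul_zero, add_zero]; field_simp
      rw [hys] at h2
      have h3 : (y / s) * φ s + (x / s) * φ 0 ≤ φ y := by simpa [smul_eq_mul] using h2
      nlinarith [mul_nonneg hxs0 h00]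
    have hsplit : (x / s) * φ s + (y / s) * φ s = φ s := by
      rw [← add_mul, hsum1, one_mul]
    linarith

theorem stmt_11 {N : ℕ} (R : EuclideanSpace ℝ (Fin N) → ℝ)
    (θ : ℕ → EuclideanSpace ℝ (Fin N)) (η : ℕ → ℝ) (lam Rstar : ℝ)
    (φ φ' : ℝ → ℝ) (p q : ℕ) (hpq : p ≤ q)
    (hlam : lam ∈ Set.Ioo (0 : ℝ) 1) (hη : ∀ k, 0 < η k)
    (hrec : ∀ k, p ≤ k → k < q → θ (k + 1) = θ k - η k • gradient R (θ k))
    (harmijo : ∀ k, p ≤ k → k < q →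
      R (θ k) - R (θ (k + 1)) ≥
        lam * η k * ‖gradient R (θ k)‖ * ‖gradient R (θ (k + 1))‖)
    (hbelow : ∀ k, p ≤ k → k ≤ q → R (θ k) < Rstar)
    (hmono : ∀ k, p ≤ k → k < q → Rstar - R (θ (k + 1)) ≥ Rstar - R (θ k))
    (hφmono : MonotoneOn φ (Set.Ici 0))
    (hφconc : ConcaveOn ℝ (Set.Ici 0) φ)
    (hφnonneg : ∀ x ∈ Set.Ici (0 : ℝ), 0 ≤ φ x)
    (hφderiv : ∀ y ∈ Set.Ioi (0 : ℝ), HasDerivAt φ (φ' y) y)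
    (hKL : ∀ k, p ≤ k → k ≤ q → φ' (Rstar - R (θ k)) * ‖gradient R (θ k)‖ ≥ 1) :
    (∑ k ∈ Finset.Ico p q, ‖θ (k + 1) - θ k‖) ≤
        (1 / lam) * (φ (Rstar - R (θ q)) - φ (Rstar - R (θ p))) ∧
      (1 / lam) * (φ (Rstar - R (θ q)) - φ (Rstar - R (θ p))) ≤
        (1 / lam) * φ (R (θ p) - R (θ q)) := by
  obtain ⟨hlam0, hlam1⟩ := hlam
  -- step inequality
  have hstep : ∀ k, p ≤ k → k < q →
      lam * ‖θ (k + 1) - θ k‖ ≤ φ (Rstar - R (θ (k+1))) - φ (Rstar - R (θ k)) := by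
    intro k hpk hkq
    set a := Rstar - R (θ k) with ha
    set b := Rstar - R (θ (k+1)) with hb
    have hapos : 0 < a := by
      have := hbelow k hpk (le_of_lt hkq); linarith
    have hab : a ≤ b := hmono k hpk hkq
    have hbpos : 0 < b := lt_of_lt_of_le hapos hab
    have hgk1 := hKL (k+1) (le_trans hpk (Nat.le_succ k)) hkq
    have hg1pos : 0 < ‖gradient R (θ (k+1))‖ := by
      by_contra hle
      push_neg at hle
      have h0 : ‖gradient R (θ (k+1))‖ = 0 := le_antisymm hle (norm_nonneg _)
      rw [h0] at hgk1; simp at hgk1; linarith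
    have hφ'b : 0 < φ' b := by
      nlinarith [norm_nonneg (gradient R (θ (k+1)))]
    have hnorm : ‖θ (k + 1) - θ k‖ = η k * ‖gradient R (θ k)‖ := by
      rw [hrec k hpk hkq]
      have : θ k - η k • gradient R (θ k) - θ k = -(η k • gradient R (θ k)) := by
        abel
      rw [this, norm_neg, norm_smul, Real.norm_eq_abs, abs_of_pos (hη k)]
    have harm := harmijo k hpk hkq
    have hba : b - a = R (θ k) - R (θ (k+1)) := by rw [ha, hb]; ring
    rcases eq_or_lt_of_le hab with heq | hlt
    · -- b = a : gradient must vanish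
      have hz : lam * η k * ‖gradient R (θ k)‖ * ‖gradient R (θ (k+1))‖ ≤ 0 := by
        rw [← hba, ← heq] at harm; linarith
      have hgk0 : ‖gradient R (θ k)‖ = 0 := by
        nlinarith [norm_nonneg (gradient R (θ k)), mul_pos (mul_pos hlam0 (hη k)) hg1pos]
      rw [hnorm, hgk0, ← heq]
      simp
    · -- a < b : tangent line inequality
      have hslope := hφconc.le_slope_of_hasDerivAt (Set.mem_Ici.2 hapos.le)
        (Set.mem_Ici.2 hbpos.le) hlt (hφderiv b (Set.mem_Ioi.2 hbpos))
      rw [slope_def_field] at hslope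
      have htan : φ' b * (b - a) ≤ φ b - φ a := by
        have h' : φ' b ≤ (φ b - φ a) / (b - a) := hslope
        have hba' : 0 < b - a := by linarith
        calc φ' b * (b - a) ≤ ((φ b - φ a) / (b - a)) * (b - a) := by
              exact mul_le_mul_of_nonneg_right h' hba'.le
          _ = φ b - φ a := by field_simp
      rw [hnorm]
      have hchain : φ' b * (b - a) ≥ φ' b * (lam * η k * ‖gradient R (θ k)‖ * ‖gradient R (θ (k+1))‖) := by
        apply mul_le_mul_of_nonneg_left _ hφ'b.le
        rw [hba]; exact harm
      have hfin : φ' b * (lam * η k * ‖gradient R (θ k)‖ * ‖gradient R (θ (k+1))‖)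
          ≥ lam * (η k * ‖gradient R (θ k)‖) := by
        have h1 : φ' b * ‖gradient R (θ (k+1))‖ ≥ 1 := hgk1
        have hkey : 0 ≤ lam * η k * ‖gradient R (θ k)‖ * (φ' b * ‖gradient R (θ (k+1))‖ - 1) :=
          mul_nonneg (mul_nonneg (mul_nonneg hlam0.le (hη k).le) (norm_nonneg _))
            (by linarith)
        nlinarith [hkey]
      linarith
  -- telescoping sum
  have hsum : ∀ n, p ≤ n → n ≤ q →
      lam * (∑ k ∈ Finset.Ico p n, ‖θ (k + 1) - θ k‖)
        ≤ φ (Rstar - R (θ n)) - φ (Rstar - R (θ p)) := by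
    intro n hn
    induction n, hn using Nat.le_induction with
    | base => intro _; simp
    | succ n hpn ih =>
      intro hq
      have hnq : n < q := hq
      have h1 := ih (le_of_lt hnq)
      have h2 := hstep n hpn hnq
      rw [Finset.sum_Ico_succ_top hpn, mul_add]
      linarith
  have hmain := hsum q hpq le_rfl
  constructor
  · rw [div_mul_eq_mul_div, le_div_iff₀ hlam0, one_mul]
    calc (∑ k ∈ Finset.Ico p q, ‖θ (k + 1) - θ k‖) * lam
        = lam * (∑ k ∈ Finset.Ico p q, ‖θ (k + 1) - θ k‖) := by ring
      _ ≤ _ := hmain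
  · -- subadditivity part
    have hRq : R (θ q) ≤ R (θ p) := by
      have : ∀ n, p ≤ n → n ≤ q → Rstar - R (θ p) ≤ Rstar - R (θ n) := by
        intro n hn
        induction n, hn using Nat.le_induction with
        | base => intro _; exact le_rfl
        | succ n hpn ih =>
          intro hq
          have hnq : n < q := hq
          have := hmono n hpn hnq
          have := ih (le_of_lt hnq)
          linarith
      have := this q hpq le_rfl
      linarith
    have hap : 0 < Rstar - R (θ p) := by
      have := hbelow p le_rfl hpq; linarith
    have hsub : φ (Rstar - R (θ q)) ≤ φ (Rstar - R (θ p)) + φ (R (θ p) - R (θ q)) := by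
      have := concave_subadd hφconc hφnonneg hap.le (by linarith : (0:ℝ) ≤ R (θ p) - R (θ q))
      have heq : Rstar - R (θ p) + (R (θ p) - R (θ q)) = Rstar - R (θ q) := by ring
      rwa [heq] at this
    have h1lam : 0 ≤ 1 / lam := by positivity
    apply mul_le_mul_of_nonneg_left _ h1lam
    linarith
end
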